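/- Let U be twice continuously differentiable at x₀ with U'(x₀) > 0 and U three times differentiable, let h : [0,1] → [0,1] be three times continuously differentiable at p₀ ∈ (0,1) with h'(p₀) > 0, and let σ(ε₁,ε₂) solve (h(p₀+ε₂)-h(p₀-ε₂))·U(x₀-σ) = (h(p₀)-h(p₀-ε₂))·U(x₀-ε₁) + (h(p₀+ε₂)-h(p₀))·U(x₀+ε₁). Then σ(ε₁,ε₂) = -(ε₁ε₂/2)·h''(p₀)/h'(p₀) - (ε₁²/2)·U''(x₀)/U'(x₀) + o(ε₁² + ε₁ε₂) as (ε₁,ε₂) → (0,0) with ε₁,ε₂ > 0. -/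

import Mathlib

set_option maxHeartbeats 1000000

open Set Filter Asymptotics

lemma peano2 (f : ℝ → ℝ) (a : ℝ) (hf : ContDiffAt ℝ 2 f a) :
    (fun t => f (a + t) - f a - deriv f a * t - deriv (deriv f) a * (t ^ 2 / 2))
      =o[nhds 0] (fun t : ℝ => t ^ 2) := by
  obtain ⟨u, hu, hfu⟩ : ∃ u ∈ nhds a, ContDiffOn ℝ 2 f u :=
    hf.contDiffOn le_rfl (by norm_num)
  obtain ⟨v, hva, hvo, hvu⟩ : ∃ v, a ∈ v ∧ IsOpen v ∧ v ⊆ u := by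
    rcases mem_nhds_iff.1 hu with ⟨v, hvu, hvo, hva⟩
    exact ⟨v, hva, hvo, hvu⟩
  have hC2 : ContDiffOn ℝ 2 f v := hfu.mono hvu
  have hdf : ∀ x ∈ v, HasDerivAt f (deriv f x) x := fun x hx =>
    ((hC2.differentiableOn (by norm_num)).differentiableAt (hvo.mem_nhds hx)).hasDerivAt
  have hderivC1 : ContDiffOn ℝ 1 (deriv f) v := hC2.deriv_of_isOpen hvo (by norm_num)
  have hdd : HasDerivAt (deriv f) (deriv (deriv f) a) a :=
    ((hderivC1.differentiableOn (by norm_num)).differentiableAt (hvo.mem_nhds hva)).hasDerivAt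
  set f1 := deriv f a
  set f2 := deriv (deriv f) a
  set F : ℝ → ℝ := fun t => f (a + t) - f a - f1 * t - f2 * (t ^ 2 / 2) with hF
  set g : ℝ → ℝ := fun t => deriv f (a + t) - f1 - f2 * t with hgdef
  -- g = o(t)
  have htr : Tendsto (fun t : ℝ => a + t) (nhds 0) (nhds a) := by
    simpa using (tendsto_const_nhds.add tendsto_id : Tendsto (fun t : ℝ => a + t) (nhds 0) (nhds (a + 0)))
  have hg : g =o[nhds 0] (fun t : ℝ => t) := by
    have h1 := (hasDerivAt_iff_isLittleO.1 hdd).comp_tendsto htr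
    simp only [Function.comp_def, add_sub_cancel_left, smul_eq_mul] at h1
    simpa [hgdef, mul_comm] using h1
  -- F has derivative g near 0
  have hFd : ∀ᶠ t in nhds 0, HasDerivAt F (g t) t := by
    have hmem : ∀ᶠ t in nhds 0, a + t ∈ v := htr (hvo.mem_nhds hva)
    filter_upwards [hmem] with t ht
    have h1 : HasDerivAt (fun t : ℝ => f (a + t)) (deriv f (a + t)) t := by
      have := (hdf _ ht).comp t ((hasDerivAt_id t).const_add a)
      simpa [Function.comp_def] using this
    have h2 : HasDerivAt (fun t : ℝ => f a + f1 * t + f2 * (t ^ 2 / 2))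
        (f1 + f2 * t) t := by
      have : HasDerivAt (fun t : ℝ => f a + f1 * t + f2 * (t ^ 2 / 2))
          (0 + f1 * 1 + f2 * (2 * t ^ 1 / 2)) t := by
        exact ((hasDerivAt_const t (f a)).add
          ((hasDerivAt_id t).const_mul f1)).add
          (((hasDerivAt_pow 2 t).div_const 2).const_mul f2)
      simpa using this
    have : HasDerivAt ((fun t => f (a + t)) - fun t => f a + f1 * t + f2 * (t ^ 2 / 2))
        (deriv f (a + t) - (f1 + f2 * t)) t := h1.sub h2
    convert this using 1
    · funext s; simp [hF]; ring
    · simp [hgdef]; ring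
  -- conclude
  rw [isLittleO_iff]
  intro ε hε
  have hgo : ∀ᶠ s in nhds 0, ‖g s‖ ≤ ε / 2 * ‖s‖ := isLittleO_iff.1 hg (half_pos hε)
  obtain ⟨δ, hδ, hball⟩ := Metric.eventually_nhds_iff.1 (hgo.and hFd)
  have hev : ∀ᶠ t in nhds (0:ℝ), |t| < δ := by
    have : Metric.ball (0:ℝ) δ ∈ nhds 0 := Metric.ball_mem_nhds 0 hδ
    filter_upwards [this] with t ht
    simpa [Real.dist_eq] using ht
  filter_upwards [hev] with t ht
  have hsub : ∀ x ∈ uIcc (0:ℝ) t, ‖g x‖ ≤ ε / 2 * |t| ∧ HasDerivAt F (g x) x := by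
    intro x hx
    have hxt : |x| ≤ |t| := by
      rcases mem_uIcc.1 hx with h | h
      · simpa using abs_le_max_abs_abs h.1 h.2
      · have := abs_le_max_abs_abs h.1 h.2
        simpa [max_comm] using this
    have hxδ : dist x 0 < δ := by
      simpa [Real.dist_eq] using lt_of_le_of_lt hxt ht
    refine ⟨le_trans (hball hxδ).1 ?_, (hball hxδ).2⟩
    have : ‖x‖ ≤ |t| := by simpa using hxt
    nlinarith [norm_nonneg x, half_pos hε]
  have hF0 : F 0 = 0 := by simp [hF]
  have := Convex.norm_image_sub_le_of_norm_hasDerivWithin_le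
    (fun x hx => ((hsub x hx).2).hasDerivWithinAt)
    (fun x hx => (hsub x hx).1) (convex_uIcc 0 t) (left_mem_uIcc) (right_mem_uIcc)
  rw [hF0, sub_zero, sub_zero] at this
  calc ‖F t‖ ≤ ε / 2 * |t| * ‖t‖ := this
    _ ≤ ε * ‖t ^ 2‖ := by
        rw [Real.norm_eq_abs, Real.norm_eq_abs, abs_pow]
        nlinarith [abs_nonneg t, hε.le]



/-- Local approximation of the RDU risk premium:
σ(ε₁,ε₂) = -(ε₁ε₂/2)·h''(p₀)/h'(p₀) - (ε₁²/2)·U''(x₀)/U'(x₀) + o(ε₁² + ε₁ε₂). -/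
theorem rdu_risk_premium_local
    (U h : ℝ → ℝ) (x₀ p₀ : ℝ) (hp : p₀ ∈ Ioo (0:ℝ) 1)
    (hUC : ContDiffAt ℝ 3 U x₀) (hUd : 0 < deriv U x₀)
    (hhC : ContDiffAt ℝ 3 h p₀) (hhd : 0 < deriv h p₀)
    (sig : ℝ → ℝ → ℝ)
    (hsig : ∀ᶠ e : ℝ × ℝ in (nhdsWithin 0 (Ioi 0)) ×ˢ (nhdsWithin 0 (Ioi 0)),
      (h (p₀ + e.2) - h (p₀ - e.2)) * U (x₀ - sig e.1 e.2) =
        (h p₀ - h (p₀ - e.2)) * U (x₀ - e.1) +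
        (h (p₀ + e.2) - h p₀) * U (x₀ + e.1))
    (hsig0 : Filter.Tendsto (fun e : ℝ × ℝ => sig e.1 e.2)
      ((nhdsWithin 0 (Ioi 0)) ×ˢ (nhdsWithin 0 (Ioi 0))) (nhds 0)) :
    (fun e : ℝ × ℝ => sig e.1 e.2
        + e.1 * e.2 / 2 * (deriv (deriv h) p₀ / deriv h p₀)
        + e.1 ^ 2 / 2 * (deriv (deriv U) x₀ / deriv U x₀))
      =o[(nhdsWithin (0:ℝ) (Ioi 0)) ×ˢ (nhdsWithin (0:ℝ) (Ioi 0))]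
        (fun e : ℝ × ℝ => e.1 ^ 2 + e.1 * e.2) := by
  set l := (nhdsWithin (0:ℝ) (Ioi 0)) ×ˢ (nhdsWithin (0:ℝ) (Ioi 0)) with hldef
  set U1 := deriv U x₀ with hU1def
  set U2 := deriv (deriv U) x₀ with hU2def
  set h1 := deriv h p₀ with hh1def
  set h2 := deriv (deriv h) p₀ with hh2def
  have hU1 : U1 ≠ 0 := ne_of_gt hUd
  have hh1 : h1 ≠ 0 := ne_of_gt hhd
  -- Taylor remainders
  set ψ : ℝ → ℝ := fun t => U (x₀ + t) - U x₀ - U1 * t - U2 * (t ^ 2 / 2) with hψdef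
  have hψ : ψ =o[nhds 0] (fun t : ℝ => t ^ 2) := peano2 U x₀ (hUC.of_le (by norm_num))
  set φ : ℝ → ℝ := fun t => h (p₀ + t) - h p₀ - h1 * t - h2 * (t ^ 2 / 2) with hφdef
  have hφ : φ =o[nhds 0] (fun t : ℝ => t ^ 2) := peano2 h p₀ (hhC.of_le (by norm_num))
  have hsq : (fun t : ℝ => t ^ 2) =o[nhds 0] (fun t : ℝ => t) := by
    simpa using (isLittleO_pow_id (n := 2) (by norm_num) : _ )
  set G : ℝ → ℝ := fun t => U (x₀ + t) - U x₀ - U1 * t with hGdef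
  have hGψ : ∀ t, G t = U2 * (t ^ 2 / 2) + ψ t := by
    intro t; simp only [hGdef, hψdef]; ring
  have hG : G =o[nhds 0] (fun t : ℝ => t) := by
    have h1' : (fun t : ℝ => U2 * (t ^ 2 / 2)) =o[nhds 0] (fun t : ℝ => t) := by
      have := (hsq.const_mul_left (U2 / 2))
      refine this.congr_left fun t => by ring
    have := h1'.add (hψ.trans hsq)
    exact this.congr_left fun t => (hGψ t).symm
  -- basic filter facts
  have hsnd : Tendsto (fun e : ℝ × ℝ => e.2) l (nhdsWithin 0 (Ioi 0)) := tendsto_snd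
  have hfst : Tendsto (fun e : ℝ × ℝ => e.1) l (nhdsWithin 0 (Ioi 0)) := tendsto_fst
  have hsnd0 : Tendsto (fun e : ℝ × ℝ => e.2) l (nhds 0) := hsnd.mono_right nhdsWithin_le_nhds
  have hfst0 : Tendsto (fun e : ℝ × ℝ => e.1) l (nhds 0) := hfst.mono_right nhdsWithin_le_nhds
  have hupos : ∀ᶠ e : ℝ × ℝ in l, 0 < e.1 := hfst self_mem_nhdsWithin
  have htpos : ∀ᶠ e : ℝ × ℝ in l, 0 < e.2 := hsnd self_mem_nhdsWithin
  have htpos' : ∀ᶠ t : ℝ in nhdsWithin 0 (Ioi 0), 0 < t := self_mem_nhdsWithin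
  -- single-variable asymptotics for h near p₀, along 𝓝[>] 0
  have hφt2 : Tendsto (fun t : ℝ => φ t / t ^ 2) (nhds 0) (nhds 0) :=
    hφ.tendsto_div_nhds_zero
  have hφnt2 : Tendsto (fun t : ℝ => φ (-t) / t ^ 2) (nhds 0) (nhds 0) := by
    have hneg : Tendsto (fun t : ℝ => -t) (nhds (0:ℝ)) (nhds 0) := by
      simpa using (tendsto_id (α := ℝ) (x := nhds 0)).neg
    have := hφt2.comp hneg
    simpa [Function.comp_def, neg_sq] using this
  have hφt : Tendsto (fun t : ℝ => φ t / t) (nhds 0) (nhds 0) :=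
    (hφ.trans hsq).tendsto_div_nhds_zero
  have hφnt : Tendsto (fun t : ℝ => φ (-t) / t) (nhds 0) (nhds 0) := by
    have hneg : Tendsto (fun t : ℝ => -t) (nhds (0:ℝ)) (nhds 0) := by
      simpa using (tendsto_id (α := ℝ) (x := nhds 0)).neg
    have := (hφt.comp hneg).neg
    simpa [Function.comp_def, div_neg] using this
  -- a t / t → 2 h1
  have hkeya : ∀ t : ℝ, h (p₀ + t) - h (p₀ - t) = 2 * h1 * t + φ t - φ (-t) := by
    intro t; simp only [hφdef]; ring
  have hkeyb : ∀ t : ℝ, h p₀ - h (p₀ - t) = h1 * t - h2 * (t ^ 2 / 2) - φ (-t) := by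
    intro t; simp only [hφdef]; ring
  have hkeyc : ∀ t : ℝ, h (p₀ + t) - h p₀ = h1 * t + h2 * (t ^ 2 / 2) + φ t := by
    intro t; simp only [hφdef]; ring
  have hat : Tendsto (fun t : ℝ => (h (p₀ + t) - h (p₀ - t)) / t)
      (nhdsWithin 0 (Ioi 0)) (nhds (2 * h1)) := by
    have base : Tendsto (fun t : ℝ => 2 * h1 + φ t / t - φ (-t) / t)
        (nhdsWithin 0 (Ioi 0)) (nhds (2 * h1)) := by
      have := ((tendsto_const_nhds (x := 2 * h1)).add hφt).sub hφnt
      simpa using this.mono_left nhdsWithin_le_nhds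
    refine base.congr' ?_
    filter_upwards [htpos'] with t ht
    have ht' : t ≠ 0 := ne_of_gt ht
    rw [hkeya t]; field_simp
  -- eventually a t ≠ 0, and t / a t → 1/(2 h1)
  have hagt : ∀ᶠ t : ℝ in nhdsWithin 0 (Ioi 0),
      h1 < (h (p₀ + t) - h (p₀ - t)) / t :=
    (tendsto_order.1 hat).1 h1 (by linarith)
  have hane : ∀ᶠ t : ℝ in nhdsWithin 0 (Ioi 0), h (p₀ + t) - h (p₀ - t) ≠ 0 := by
    filter_upwards [hagt, htpos'] with t h1t ht
    intro hzero
    rw [hzero, zero_div] at h1t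
    linarith
  have hta : Tendsto (fun t : ℝ => t / (h (p₀ + t) - h (p₀ - t)))
      (nhdsWithin 0 (Ioi 0)) (nhds (1 / (2 * h1))) := by
    have h2h1 : (2 : ℝ) * h1 ≠ 0 := by positivity
    have h' := (hat.inv₀ h2h1).congr fun t => inv_div _ _
    simpa [one_div] using h'
  -- b/a → 1/2, c/a → 1/2
  have hbt : Tendsto (fun t : ℝ => (h p₀ - h (p₀ - t)) / t)
      (nhdsWithin 0 (Ioi 0)) (nhds h1) := by
    have base : Tendsto (fun t : ℝ => h1 - h2 * (t / 2) - φ (-t) / t)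
        (nhdsWithin 0 (Ioi 0)) (nhds h1) := by
      have c1 : Tendsto (fun t : ℝ => h2 * (t / 2)) (nhds (0:ℝ)) (nhds 0) := by
        have := ((tendsto_id (α := ℝ) (x := nhds 0)).div_const 2).const_mul h2
        simpa using this
      have := ((tendsto_const_nhds (x := h1)).sub c1).sub hφnt
      simpa using this.mono_left nhdsWithin_le_nhds
    refine base.congr' ?_
    filter_upwards [htpos'] with t ht
    have ht' : t ≠ 0 := ne_of_gt ht
    rw [hkeyb t]; field_simp
  have hct : Tendsto (fun t : ℝ => (h (p₀ + t) - h p₀) / t)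
      (nhdsWithin 0 (Ioi 0)) (nhds h1) := by
    have base : Tendsto (fun t : ℝ => h1 + h2 * (t / 2) + φ t / t)
        (nhdsWithin 0 (Ioi 0)) (nhds h1) := by
      have c1 : Tendsto (fun t : ℝ => h2 * (t / 2)) (nhds (0:ℝ)) (nhds 0) := by
        have := ((tendsto_id (α := ℝ) (x := nhds 0)).div_const 2).const_mul h2
        simpa using this
      have := ((tendsto_const_nhds (x := h1)).add c1).add hφt
      simpa using this.mono_left nhdsWithin_le_nhds
    refine base.congr' ?_
    filter_upwards [htpos'] with t ht
    have ht' : t ≠ 0 := ne_of_gt ht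
    rw [hkeyc t]; field_simp
  have hba : Tendsto (fun t : ℝ => (h p₀ - h (p₀ - t)) / (h (p₀ + t) - h (p₀ - t)))
      (nhdsWithin 0 (Ioi 0)) (nhds (1 / 2)) := by
    have := hbt.mul hta
    have hval : h1 * (1 / (2 * h1)) = 1 / 2 := by field_simp
    rw [hval] at this
    refine this.congr' ?_
    filter_upwards [htpos'] with t ht
    have ht' : t ≠ 0 := ne_of_gt ht
    rw [div_mul_div_comm, mul_comm _ t, mul_div_mul_left _ _ ht']
  have hca : Tendsto (fun t : ℝ => (h (p₀ + t) - h p₀) / (h (p₀ + t) - h (p₀ - t)))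
      (nhdsWithin 0 (Ioi 0)) (nhds (1 / 2)) := by
    have := hct.mul hta
    have hval : h1 * (1 / (2 * h1)) = 1 / 2 := by field_simp
    rw [hval] at this
    refine this.congr' ?_
    filter_upwards [htpos'] with t ht
    have ht' : t ≠ 0 := ne_of_gt ht
    rw [div_mul_div_comm, mul_comm _ t, mul_div_mul_left _ _ ht']
  -- the curvature term: N = o(t)
  have hN : (fun t : ℝ => ((h (p₀ + t) - h p₀) - (h p₀ - h (p₀ - t))) /
        (h (p₀ + t) - h (p₀ - t)) - h2 / (2 * h1) * t)
      =o[nhdsWithin 0 (Ioi 0)] (fun t : ℝ => t) := by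
    have hev : ∀ᶠ t : ℝ in nhdsWithin 0 (Ioi 0), t = 0 →
        ((h (p₀ + t) - h p₀) - (h p₀ - h (p₀ - t))) /
          (h (p₀ + t) - h (p₀ - t)) - h2 / (2 * h1) * t = 0 := by
      filter_upwards [htpos'] with t ht h0
      exact absurd h0 (ne_of_gt ht)
    refine (isLittleO_iff_tendsto' hev).2 ?_
    have base : Tendsto (fun t : ℝ =>
        (2 * h1 * (φ t / t ^ 2 + φ (-t) / t ^ 2) - h2 * (φ t / t - φ (-t) / t)) *
          (t / (h (p₀ + t) - h (p₀ - t))) / (2 * h1))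
        (nhdsWithin 0 (Ioi 0)) (nhds 0) := by
      have inner : Tendsto (fun t : ℝ =>
          2 * h1 * (φ t / t ^ 2 + φ (-t) / t ^ 2) - h2 * (φ t / t - φ (-t) / t))
          (nhds 0) (nhds 0) := by
        have := ((hφt2.add hφnt2).const_mul (2 * h1)).sub ((hφt.sub hφnt).const_mul h2)
        simpa using this
      have := ((inner.mono_left nhdsWithin_le_nhds).mul hta).div_const (2 * h1)
      simpa using this
    refine base.congr' ?_
    filter_upwards [htpos', hane] with t ht ha
    have ht' : t ≠ 0 := ne_of_gt ht
    simp only [hφdef]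
    field_simp
    ring
  -- lift to the product filter
  have hanel : ∀ᶠ e : ℝ × ℝ in l, h (p₀ + e.2) - h (p₀ - e.2) ≠ 0 := hsnd.eventually hane
  have hNl : (fun e : ℝ × ℝ => ((h (p₀ + e.2) - h p₀) - (h p₀ - h (p₀ - e.2))) /
        (h (p₀ + e.2) - h (p₀ - e.2)) - h2 / (2 * h1) * e.2) =o[l] (fun e : ℝ × ℝ => e.2) := by
    simpa [Function.comp_def] using hN.comp_tendsto hsnd
  have hT1 : (fun e : ℝ × ℝ => e.1 * (((h (p₀ + e.2) - h p₀) - (h p₀ - h (p₀ - e.2))) /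
        (h (p₀ + e.2) - h (p₀ - e.2)) - h2 / (2 * h1) * e.2)) =o[l]
      (fun e : ℝ × ℝ => e.1 * e.2) :=
    (isBigO_refl (fun e : ℝ × ℝ => e.1) l).mul_isLittleO hNl
  have hbal : Tendsto (fun e : ℝ × ℝ => (h p₀ - h (p₀ - e.2)) / (h (p₀ + e.2) - h (p₀ - e.2)))
      l (nhds (1 / 2)) := hba.comp hsnd
  have hcal : Tendsto (fun e : ℝ × ℝ => (h (p₀ + e.2) - h p₀) / (h (p₀ + e.2) - h (p₀ - e.2)))
      l (nhds (1 / 2)) := hca.comp hsnd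
  have hnegfst : Tendsto (fun e : ℝ × ℝ => -e.1) l (nhds 0) := by simpa using hfst0.neg
  have hψfst : (fun e : ℝ × ℝ => ψ e.1) =o[l] (fun e : ℝ × ℝ => e.1 ^ 2) := by
    simpa [Function.comp_def] using hψ.comp_tendsto hfst0
  have hψnfst : (fun e : ℝ × ℝ => ψ (-e.1)) =o[l] (fun e : ℝ × ℝ => e.1 ^ 2) := by
    simpa [Function.comp_def, neg_sq] using hψ.comp_tendsto hnegfst
  have hT2a : (fun e : ℝ × ℝ =>
      (h p₀ - h (p₀ - e.2)) / (h (p₀ + e.2) - h (p₀ - e.2)) * ψ (-e.1)) =o[l]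
      (fun e : ℝ × ℝ => e.1 ^ 2) := by
    simpa using (hbal.isBigO_one ℝ).mul_isLittleO hψnfst
  have hT2b : (fun e : ℝ × ℝ =>
      (h (p₀ + e.2) - h p₀) / (h (p₀ + e.2) - h (p₀ - e.2)) * ψ e.1) =o[l]
      (fun e : ℝ × ℝ => e.1 ^ 2) := by
    simpa using (hcal.isBigO_one ℝ).mul_isLittleO hψfst
  have hT2 : (fun e : ℝ × ℝ =>
      ((h p₀ - h (p₀ - e.2)) / (h (p₀ + e.2) - h (p₀ - e.2)) * ψ (-e.1) +
        (h (p₀ + e.2) - h p₀) / (h (p₀ + e.2) - h (p₀ - e.2)) * ψ e.1) / U1) =o[l]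
      (fun e : ℝ × ℝ => e.1 ^ 2) := by
    have := (hT2a.add hT2b).const_mul_left (1 / U1)
    refine this.congr_left fun e => ?_
    field_simp
  -- G at -σ
  have hnegσ : Tendsto (fun e : ℝ × ℝ => -(sig e.1 e.2)) l (nhds 0) := by
    simpa using hsig0.neg
  have hGσ : (fun e : ℝ × ℝ => G (-(sig e.1 e.2))) =o[l]
      (fun e : ℝ × ℝ => sig e.1 e.2) := by
    have := hG.comp_tendsto hnegσ
    simpa [Function.comp_def] using this.neg_right
  -- the key algebraic identity
  have hID : ∀ᶠ e : ℝ × ℝ in l,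
      sig e.1 e.2 + e.1 * e.2 / 2 * (h2 / h1) + e.1 ^ 2 / 2 * (U2 / U1) =
        -(e.1 * (((h (p₀ + e.2) - h p₀) - (h p₀ - h (p₀ - e.2))) /
            (h (p₀ + e.2) - h (p₀ - e.2)) - h2 / (2 * h1) * e.2))
        + (-(((h p₀ - h (p₀ - e.2)) / (h (p₀ + e.2) - h (p₀ - e.2)) * ψ (-e.1) +
            (h (p₀ + e.2) - h p₀) / (h (p₀ + e.2) - h (p₀ - e.2)) * ψ e.1) / U1))
        + G (-(sig e.1 e.2)) / U1 := by
    filter_upwards [hsig, hanel] with e heq ha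
    have e1 : U (x₀ - sig e.1 e.2) = U x₀ - U1 * sig e.1 e.2 + G (-(sig e.1 e.2)) := by
      simp only [hGdef]; rw [sub_eq_add_neg x₀ (sig e.1 e.2)]; ring
    have e2 : U (x₀ - e.1) = U x₀ - U1 * e.1 + G (-e.1) := by
      simp only [hGdef]; rw [sub_eq_add_neg x₀ e.1]; ring
    have e3 : U (x₀ + e.1) = U x₀ + U1 * e.1 + G e.1 := by
      simp only [hGdef]; ring
    have e4 : ψ e.1 = G e.1 - U2 * (e.1 ^ 2 / 2) := by
      simp only [hψdef, hGdef] <;> ring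
    have e5 : ψ (-e.1) = G (-e.1) - U2 * (e.1 ^ 2 / 2) := by
      simp only [hψdef, hGdef] <;> ring
    rw [e1, e2, e3] at heq
    rw [e4, e5]
    have key : U1 * ((h (p₀ + e.2) - h (p₀ - e.2)) * sig e.1 e.2) =
        -(U1 * e.1) * ((h (p₀ + e.2) - h p₀) - (h p₀ - h (p₀ - e.2)))
        - (h p₀ - h (p₀ - e.2)) * G (-e.1) - (h (p₀ + e.2) - h p₀) * G e.1
        + (h (p₀ + e.2) - h (p₀ - e.2)) * G (-(sig e.1 e.2)) := by
      linear_combination -heq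
    field_simp
    linear_combination 2 * h1 * key
  -- σ = o(ε₁) bootstrap
  have hut_u : (fun e : ℝ × ℝ => e.1 * e.2) =o[l] (fun e : ℝ × ℝ => e.1) := by
    have h2' : (fun e : ℝ × ℝ => e.2) =o[l] (fun _ : ℝ × ℝ => (1:ℝ)) :=
      (isLittleO_one_iff ℝ).2 hsnd0
    simpa using (isBigO_refl (fun e : ℝ × ℝ => e.1) l).mul_isLittleO h2'
  have hu2_u : (fun e : ℝ × ℝ => e.1 ^ 2) =o[l] (fun e : ℝ × ℝ => e.1) := by
    have h1' : (fun e : ℝ × ℝ => e.1) =o[l] (fun _ : ℝ × ℝ => (1:ℝ)) :=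
      (isLittleO_one_iff ℝ).2 hfst0
    have := (isBigO_refl (fun e : ℝ × ℝ => e.1) l).mul_isLittleO h1'
    simpa [pow_two] using this
  have hcfun : (fun e : ℝ × ℝ =>
      -(e.1 * (((h (p₀ + e.2) - h p₀) - (h p₀ - h (p₀ - e.2))) /
          (h (p₀ + e.2) - h (p₀ - e.2)) - h2 / (2 * h1) * e.2))
      + (-(((h p₀ - h (p₀ - e.2)) / (h (p₀ + e.2) - h (p₀ - e.2)) * ψ (-e.1) +
          (h (p₀ + e.2) - h p₀) / (h (p₀ + e.2) - h (p₀ - e.2)) * ψ e.1) / U1))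
      - e.1 * e.2 / 2 * (h2 / h1) - e.1 ^ 2 / 2 * (U2 / U1)) =o[l]
      (fun e : ℝ × ℝ => e.1) := by
    have p1 := hT1.neg_left.trans_isBigO hut_u.isBigO
    have p2 := hT2.neg_left.trans_isBigO hu2_u.isBigO
    have p3 : (fun e : ℝ × ℝ => e.1 * e.2 / 2 * (h2 / h1)) =o[l]
        (fun e : ℝ × ℝ => e.1) := by
      have := (hut_u.const_mul_left (h2 / h1 / 2))
      exact this.congr_left fun e => by ring
    have p4 : (fun e : ℝ × ℝ => e.1 ^ 2 / 2 * (U2 / U1)) =o[l]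
        (fun e : ℝ × ℝ => e.1) := by
      have := (hu2_u.const_mul_left (U2 / U1 / 2))
      exact this.congr_left fun e => by ring
    have := ((p1.add p2).sub p3).sub p4
    exact this
  have hσo : (fun e : ℝ × ℝ => sig e.1 e.2) =o[l] (fun e : ℝ × ℝ => e.1) := by
    rw [isLittleO_iff]
    intro ε hε
    have hce := isLittleO_iff.1 hcfun (half_pos hε)
    have hge := isLittleO_iff.1 hGσ (c := U1 / 2) (by positivity)
    filter_upwards [hID, hce, hge] with e hid hc hg
    simp only [Real.norm_eq_abs] at hc hg ⊢
    have key' : sig e.1 e.2 =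
        (-(e.1 * (((h (p₀ + e.2) - h p₀) - (h p₀ - h (p₀ - e.2))) /
            (h (p₀ + e.2) - h (p₀ - e.2)) - h2 / (2 * h1) * e.2))
        + (-(((h p₀ - h (p₀ - e.2)) / (h (p₀ + e.2) - h (p₀ - e.2)) * ψ (-e.1) +
            (h (p₀ + e.2) - h p₀) / (h (p₀ + e.2) - h (p₀ - e.2)) * ψ e.1) / U1))
        - e.1 * e.2 / 2 * (h2 / h1) - e.1 ^ 2 / 2 * (U2 / U1))
        + G (-(sig e.1 e.2)) / U1 := by linarith [hid]
    have habs : |sig e.1 e.2| ≤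
        |(-(e.1 * (((h (p₀ + e.2) - h p₀) - (h p₀ - h (p₀ - e.2))) /
            (h (p₀ + e.2) - h (p₀ - e.2)) - h2 / (2 * h1) * e.2))
        + (-(((h p₀ - h (p₀ - e.2)) / (h (p₀ + e.2) - h (p₀ - e.2)) * ψ (-e.1) +
            (h (p₀ + e.2) - h p₀) / (h (p₀ + e.2) - h (p₀ - e.2)) * ψ e.1) / U1))
        - e.1 * e.2 / 2 * (h2 / h1) - e.1 ^ 2 / 2 * (U2 / U1))|
        + |G (-(sig e.1 e.2))| / U1 := by
      nth_rewrite 1 [key']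
      refine (abs_add_le _ _).trans (le_of_eq ?_)
      rw [abs_div, abs_of_pos hUd]
    have hGle : |G (-(sig e.1 e.2))| / U1 ≤ |sig e.1 e.2| / 2 := by
      rw [div_le_iff₀ hUd]
      calc |G (-(sig e.1 e.2))| ≤ U1 / 2 * |sig e.1 e.2| := hg
        _ = |sig e.1 e.2| / 2 * U1 := by ring
    linarith
  -- second-order control of the G(-σ) term
  have hσO := hσo.isBigO
  have hσ2 : (fun e : ℝ × ℝ => sig e.1 e.2 * sig e.1 e.2) =o[l]
      (fun e : ℝ × ℝ => e.1 ^ 2) := by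
    simpa [pow_two] using hσo.mul_isBigO hσO
  have hψσ : (fun e : ℝ × ℝ => ψ (-(sig e.1 e.2))) =o[l] (fun e : ℝ × ℝ => e.1 ^ 2) := by
    have hcomp := hψ.comp_tendsto hnegσ
    have hmid : (fun e : ℝ × ℝ => ψ (-(sig e.1 e.2))) =o[l]
        (fun e : ℝ × ℝ => sig e.1 e.2 * sig e.1 e.2) := by
      simpa [Function.comp_def, neg_sq, pow_two] using hcomp
    exact hmid.trans_isBigO (by simpa [pow_two] using hσO.mul hσO)
  have hGσ2 : (fun e : ℝ × ℝ => G (-(sig e.1 e.2)) / U1) =o[l]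
      (fun e : ℝ × ℝ => e.1 ^ 2) := by
    have hterm1 : (fun e : ℝ × ℝ => U2 * ((-(sig e.1 e.2)) ^ 2 / 2)) =o[l]
        (fun e : ℝ × ℝ => e.1 ^ 2) := by
      have := hσ2.const_mul_left (U2 / 2)
      exact this.congr_left fun e => by ring
    have hsum := hterm1.add hψσ
    have hG' : (fun e : ℝ × ℝ => G (-(sig e.1 e.2))) =o[l] (fun e : ℝ × ℝ => e.1 ^ 2) :=
      hsum.congr_left fun e => (hGψ _).symm
    have := hG'.const_mul_left (1 / U1)
    exact this.congr_left fun e => by ring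
  -- final assembly
  have hO1 : (fun e : ℝ × ℝ => e.1 * e.2) =O[l] (fun e : ℝ × ℝ => e.1 ^ 2 + e.1 * e.2) := by
    rw [isBigO_iff]
    refine ⟨1, ?_⟩
    filter_upwards [hupos, htpos] with e hu ht
    have h1p : 0 < e.1 * e.2 := mul_pos hu ht
    have h2p : 0 < e.1 ^ 2 + e.1 * e.2 := by nlinarith
    rw [Real.norm_eq_abs, Real.norm_eq_abs, abs_of_pos h1p, abs_of_pos h2p]
    nlinarith
  have hO2 : (fun e : ℝ × ℝ => e.1 ^ 2) =O[l] (fun e : ℝ × ℝ => e.1 ^ 2 + e.1 * e.2) := by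
    rw [isBigO_iff]
    refine ⟨1, ?_⟩
    filter_upwards [hupos, htpos] with e hu ht
    have h1p : 0 < e.1 ^ 2 := by positivity
    have h2p : 0 < e.1 ^ 2 + e.1 * e.2 := by nlinarith
    rw [Real.norm_eq_abs, Real.norm_eq_abs, abs_of_pos h1p, abs_of_pos h2p]
    nlinarith
  have big := ((hT1.neg_left.trans_isBigO hO1).add
    (hT2.neg_left.trans_isBigO hO2)).add (hGσ2.trans_isBigO hO2)
  exact big.congr' (hID.mono fun e he => he.symm) EventuallyEq.rfl
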